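/- Let A be a positive semidefinite real n × n matrix. Then γ₂(A) = max_{1 ≤ i ≤ n} A_{ii}, where γ₂(A) = min{ ‖L‖_{2→∞}·‖R‖_{1→2} : A = LR }. -/

import Mathlib

lemma psd_diag_nonneg {n : ℕ} {A : Matrix (Fin n) (Fin n) ℝ}
    (hA : A.PosSemidef) (i : Fin n) : 0 ≤ A i i := by
  exact hA.diag_nonneg

/-- Cauchy–Schwarz in the needed form. -/
lemma cs_sum {k : ℕ} (f g : Fin k → ℝ) :
    ∑ j, f j * g j ≤ Real.sqrt (∑ j, f j ^ 2) * Real.sqrt (∑ j, g j ^ 2) := by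
  have h := Finset.sum_mul_sq_le_sq_mul_sq Finset.univ f g
  calc ∑ j, f j * g j ≤ |∑ j, f j * g j| := le_abs_self _
    _ = Real.sqrt ((∑ j, f j * g j) ^ 2) := (Real.sqrt_sq_eq_abs _).symm
    _ ≤ Real.sqrt ((∑ j, f j ^ 2) * (∑ j, g j ^ 2)) := Real.sqrt_le_sqrt h
    _ = _ := Real.sqrt_mul (Finset.sum_nonneg fun j _ => sq_nonneg _) _

theorem stmt17 (n : ℕ) (hn : 0 < n) (A : Matrix (Fin n) (Fin n) ℝ)
    (hA : A.PosSemidef) :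
    sInf {r : ℝ | ∃ (k : ℕ) (L : Matrix (Fin n) (Fin k) ℝ)
        (R : Matrix (Fin k) (Fin n) ℝ), A = L * R ∧
        r = (⨆ i, Real.sqrt (∑ j, (L i j) ^ 2)) *
            (⨆ j, Real.sqrt (∑ i, (R i j) ^ 2))} =
      ⨆ i, A i i := by
  have : Nonempty (Fin n) := ⟨⟨0, hn⟩⟩
  -- the sup of the diagonal is attained
  obtain ⟨i₀, hi₀⟩ := Finite.exists_max (fun i : Fin n => A i i)
  have hsup : (⨆ i, A i i) = A i₀ i₀ :=
    le_antisymm (ciSup_le hi₀)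
      (le_ciSup (Finite.bddAbove_range fun i : Fin n => A i i) i₀)
  -- lower bound: every element of the set is ≥ sup of diagonal
  have hlb : ∀ r ∈ {r : ℝ | ∃ (k : ℕ) (L : Matrix (Fin n) (Fin k) ℝ)
        (R : Matrix (Fin k) (Fin n) ℝ), A = L * R ∧
        r = (⨆ i, Real.sqrt (∑ j, (L i j) ^ 2)) *
            (⨆ j, Real.sqrt (∑ i, (R i j) ^ 2))}, (⨆ i, A i i) ≤ r := by
    rintro r ⟨k, L, R, hLR, rfl⟩
    rw [hsup]
    have h1 : A i₀ i₀ = ∑ j, L i₀ j * R j i₀ := by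
      rw [hLR]; rfl
    calc A i₀ i₀ ≤ Real.sqrt (∑ j, (L i₀ j) ^ 2) * Real.sqrt (∑ j, (R j i₀) ^ 2) := by
          rw [h1]; exact cs_sum _ _
      _ ≤ (⨆ i, Real.sqrt (∑ j, (L i j) ^ 2)) *
            (⨆ j, Real.sqrt (∑ i, (R i j) ^ 2)) := by
          apply mul_le_mul
          · exact le_ciSup (Finite.bddAbove_range
              fun i => Real.sqrt (∑ j, (L i j) ^ 2)) i₀
          · exact le_ciSup (Finite.bddAbove_range
              fun j => Real.sqrt (∑ i, (R i j) ^ 2)) i₀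
          · exact Real.sqrt_nonneg _
          · exact le_trans (Real.sqrt_nonneg _) (le_ciSup (Finite.bddAbove_range
              fun i => Real.sqrt (∑ j, (L i j) ^ 2)) i₀)
  -- membership: the square-root factorization attains the sup
  have hmem : (⨆ i, A i i) ∈ {r : ℝ | ∃ (k : ℕ) (L : Matrix (Fin n) (Fin k) ℝ)
        (R : Matrix (Fin k) (Fin n) ℝ), A = L * R ∧
        r = (⨆ i, Real.sqrt (∑ j, (L i j) ^ 2)) *
            (⨆ j, Real.sqrt (∑ i, (R i j) ^ 2))} := by
    obtain ⟨S, hSh, hSS⟩ : ∃ S : Matrix (Fin n) (Fin n) ℝ, S.IsHermitian ∧ S * S = A := by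
      open scoped MatrixOrder in
      exact ⟨CFC.sqrt A, (Matrix.nonneg_iff_posSemidef.mp (CFC.sqrt_nonneg A)).1,
        CFC.sqrt_mul_sqrt_self A hA.nonneg⟩
    refine ⟨n, S, S, hSS.symm, ?_⟩
    have hherm : S.IsHermitian := hSh
    have hrow : ∀ i : Fin n, (∑ j, (S i j) ^ 2) = A i i := by
      intro i
      conv_rhs => rw [← hSS]
      simp only [Matrix.mul_apply, sq]
      refine Finset.sum_congr rfl fun j _ => ?_
      rw [show S j i = S i j from by simpa using (hherm.apply j i).symm]
    have hcol : ∀ j : Fin n, (∑ i, (S i j) ^ 2) = A j j := by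
      intro j
      conv_rhs => rw [← hSS]
      simp only [Matrix.mul_apply, sq]
      refine Finset.sum_congr rfl fun i _ => ?_
      rw [show S j i = S i j from by simpa using (hherm.apply j i).symm]
    have hsq : (⨆ i, Real.sqrt (∑ j, (S i j) ^ 2)) = Real.sqrt (A i₀ i₀) := by
      refine le_antisymm (ciSup_le fun i => ?_) ?_
      · rw [hrow i]; exact Real.sqrt_le_sqrt (hi₀ i)
      · have := le_ciSup (Finite.bddAbove_range
          fun i => Real.sqrt (∑ j, (S i j) ^ 2)) i₀
        rwa [hrow i₀] at this
    have hsq' : (⨆ j, Real.sqrt (∑ i, (S i j) ^ 2)) = Real.sqrt (A i₀ i₀) := by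
      refine le_antisymm (ciSup_le fun j => ?_) ?_
      · rw [hcol j]; exact Real.sqrt_le_sqrt (hi₀ j)
      · have := le_ciSup (Finite.bddAbove_range
          fun j => Real.sqrt (∑ i, (S i j) ^ 2)) i₀
        rwa [hcol i₀] at this
    rw [hsq, hsq', hsup, Real.mul_self_sqrt (psd_diag_nonneg hA i₀)]
  exact le_antisymm (csInf_le ⟨_, hlb⟩ hmem) (le_csInf ⟨_, hmem⟩ hlb)
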